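/- Let the edges of K_n be r-colored with color graphs G_1, ..., G_r. Call a sequence of distinct vertices (v_1,...,v_q) good if for each i < q there is a color C_i such that all of v_{i+1},...,v_q lie in the C_i-colored neighborhood of v_i. Then the number of good sequences of length q is at most q! · Π_{i=1}^r k(G_i). -/

import Mathlib

open SimpleGraph Finset

/-- Number of cliques (complete vertex subsets, including the empty set) of `G`. -/
noncomputable def cliqueCount {V : Type*} (G : SimpleGraph V) : ℕ :=
  Nat.card {s : Finset V // G.IsClique (s : Set V)}

/-- Number of independent sets of `G` (cliques of the complement). -/
noncomputable def indepCount {V : Type*} (G : SimpleGraph V) : ℕ :=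
  cliqueCount Gᶜ

/-- The graph of color-`i` edges of an edge coloring `c` of the complete graph. -/
def colorGraph {V : Type*} {r : ℕ} (c : V → V → Fin r) (i : Fin r) : SimpleGraph V where
  Adj u v := u ≠ v ∧ c u v = i ∧ c v u = i
  symm := ⟨by intro u v h; exact ⟨h.1.symm, h.2.2, h.2.1⟩⟩
  loopless := ⟨fun u h => h.1 rfl⟩

/-- `(v 0, …, v (q-1))` is a good sequence: the vertices are distinct and for each `i`
there is a color `C i` such that all later vertices lie in the `C i`-neighborhood of `v i`. -/
def GoodSeq {V : Type*} {r q : ℕ} (c : V → V → Fin r) (v : Fin q → V) : Prop :=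
  Function.Injective v ∧ ∀ i : Fin q, ∃ C : Fin r, ∀ j : Fin q, i < j → c (v i) (v j) = C

private lemma orderIsoOfFin_congr {V : Type*} [LinearOrder V] {q : ℕ}
    (T₁ T₂ : Finset V) (h1 : T₁.card = q) (h2 : T₂.card = q) (hT : T₁ = T₂) (i : Fin q) :
    (↑(T₁.orderIsoOfFin h1 i) : V) = ↑(T₂.orderIsoOfFin h2 i) := by
  subst hT; rfl

theorem goodSeq_card_le {V : Type*} [Fintype V] (r q : ℕ) (hr : 2 ≤ r)
    (c : V → V → Fin r) (hc : ∀ u v, c u v = c v u) :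
    Nat.card {v : Fin q → V // GoodSeq c v} ≤
      Nat.factorial q * ∏ i, cliqueCount (colorGraph c i) := by
  classical
  letI : LinearOrder V := LinearOrder.lift' (Fintype.equivFin V) (Fintype.equivFin V).injective
  -- the color chosen for each index of a good sequence
  set col : {v : Fin q → V // GoodSeq c v} → Fin q → Fin r :=
    fun p i => (p.2.2 i).choose with hcoldef
  have hcol : ∀ (p : {v : Fin q → V // GoodSeq c v}) (i j : Fin q), i < j →
      c (p.1 i) (p.1 j) = col p i := fun p i j h => (p.2.2 i).choose_spec j h
  -- the clique of each color
  set S : {v : Fin q → V // GoodSeq c v} → Fin r → Finset V :=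
    fun p k => (Finset.univ.filter fun i => col p i = k).image p.1 with hSdef
  have hSclique : ∀ p k, (colorGraph c k).IsClique ((S p k : Finset V) : Set V) := by
    intro p k x hx y hy hxy
    simp only [hSdef, coe_image, Set.mem_image, mem_coe, mem_filter, mem_univ, true_and,
      coe_filter, Set.mem_setOf_eq] at hx hy
    obtain ⟨i, hi, rfl⟩ := hx
    obtain ⟨j, hj, rfl⟩ := hy
    have hij : i ≠ j := fun h => hxy (by rw [h])
    rcases hij.lt_or_gt with h | h
    · exact ⟨hxy, by rw [hcol p i j h, hi], by rw [hc, hcol p i j h, hi]⟩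
    · exact ⟨hxy, by rw [hc, hcol p j i h, hj], by rw [hcol p j i h, hj]⟩
  -- the set of vertices of a good sequence
  set T : {v : Fin q → V // GoodSeq c v} → Finset V :=
    fun p => Finset.univ.image p.1 with hTdef
  have hTcard : ∀ p, (T p).card = q := by
    intro p
    rw [hTdef, card_image_of_injective _ p.2.1, card_univ, Fintype.card_fin]
  have hTS : ∀ p, T p = Finset.univ.biUnion (S p) := by
    intro p
    ext x
    simp only [hTdef, hSdef, mem_image, mem_univ, true_and, mem_biUnion, mem_filter]
    constructor
    · rintro ⟨i, rfl⟩; exact ⟨col p i, i, rfl, rfl⟩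
    · rintro ⟨k, i, -, rfl⟩; exact ⟨i, rfl⟩
  have hmemT : ∀ p i, p.1 i ∈ T p := by
    intro p i; rw [hTdef]; exact mem_image_of_mem _ (mem_univ i)
  -- the permutation recording the order
  set σ : {v : Fin q → V // GoodSeq c v} → Fin q → Fin q :=
    fun p i => ((T p).orderIsoOfFin (hTcard p)).symm ⟨p.1 i, hmemT p i⟩ with hσdef
  have hσval : ∀ p i, (↑((T p).orderIsoOfFin (hTcard p) (σ p i)) : V) = p.1 i := by
    intro p i
    rw [hσdef]
    simp
  have hσinj : ∀ p, Function.Injective (σ p) := by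
    intro p a b hab
    apply p.2.1
    rw [← hσval p a, ← hσval p b, hab]
  -- the injection
    
  have key : Nat.card {v : Fin q → V // GoodSeq c v} ≤
      Nat.card ((Fin q ↪ Fin q) ×
        (∀ k : Fin r, {s : Finset V // (colorGraph c k).IsClique (s : Set V)})) := by
    apply Nat.card_le_card_of_injective
      (f := fun p => (⟨σ p, hσinj p⟩, fun k => ⟨S p k, hSclique p k⟩))
    intro p p' h
    rw [Prod.mk.injEq] at h
    obtain ⟨h1, h2⟩ := h
    have hσeq : σ p = σ p' := congrArg (fun e => (e : Fin q ↪ Fin q).toFun) h1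
    have hSeq : S p = S p' := by
      funext k
      exact congrArg Subtype.val (congrFun h2 k)
    have hTeq : T p = T p' := by rw [hTS, hTS, hSeq]
    ext i
    rw [← hσval p i, ← hσval p' i,
      orderIsoOfFin_congr (T p) (T p') (hTcard p) (hTcard p') hTeq,
      hσeq]
  refine key.trans ?_
  rw [Nat.card_prod, Nat.card_pi, Nat.card_eq_fintype_card, Fintype.card_embedding_eq,
    Fintype.card_fin, Nat.descFactorial_self]
  rfl
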